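/- Let α ∈ (0,2) and c > 0. Then for every x > 0 the improper Fourier integral defining H_{α,c}(x) admits the absolutely convergent Laplace-type representation H_{α,c}(x) = (sin(πα/2)/π) · ∫_0^∞ e^{-tx} · t^α / ( c² + 2c·cos(πα/2)·t^α + t^{2α} ) dt. -/

import Mathlib

open Filter Set MeasureTheory

lemma auxGL_cpow_re (z : ℂ) (hz : z ≠ 0) (α : ℝ) :
    (z ^ (α:ℂ)).re = ‖z‖ ^ α * Real.cos (α * Complex.arg z) := by
  rw [Complex.cpow_def_of_ne_zero hz]
  have h1 : (Complex.log z * (α:ℂ)).re = Real.log ‖z‖ * α := by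
    simp [Complex.log_re]
  have h2 : (Complex.log z * (α:ℂ)).im = Complex.arg z * α := by
    simp [Complex.log_im]
  rw [Complex.exp_re, h1, h2, ← Real.rpow_def_of_pos (norm_pos_iff.mpr hz), mul_comm α]

lemma auxGL_cpow_im (z : ℂ) (hz : z ≠ 0) (α : ℝ) :
    (z ^ (α:ℂ)).im = ‖z‖ ^ α * Real.sin (α * Complex.arg z) := by
  rw [Complex.cpow_def_of_ne_zero hz]
  have h1 : (Complex.log z * (α:ℂ)).re = Real.log ‖z‖ * α := by
    simp [Complex.log_re]
  have h2 : (Complex.log z * (α:ℂ)).im = Complex.arg z * α := by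
    simp [Complex.log_im]
  rw [Complex.exp_im, h1, h2, ← Real.rpow_def_of_pos (norm_pos_iff.mpr hz), mul_comm α]

lemma auxGL_den_ne (α c : ℝ) (hα : 0 < α) (hα2 : α < 2) (hc : 0 < c) (z : ℂ)
    (hre : 0 ≤ z.re) (him : 0 ≤ z.im) : (c:ℂ) + z ^ (α:ℂ) ≠ 0 := by
  rcases eq_or_ne z 0 with rfl | hz
  · rw [Complex.zero_cpow (by exact_mod_cast hα.ne')]
    simpa using hc.ne'
  have harg0 : 0 ≤ Complex.arg z := Complex.arg_nonneg_iff.2 him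
  have harg2 : Complex.arg z ≤ Real.pi / 2 := Complex.arg_le_pi_div_two_iff.2 (Or.inl hre)
  have hpos : (0:ℝ) < ‖z‖ ^ α := Real.rpow_pos_of_pos (norm_pos_iff.mpr hz) α
  rcases eq_or_lt_of_le harg0 with h0 | h0
  · -- arg = 0 : real part positive
    intro h
    have : ((c:ℂ) + z ^ (α:ℂ)).re = 0 := by rw [h]; rfl
    rw [Complex.add_re, Complex.ofReal_re, auxGL_cpow_re z hz α, ← h0] at this
    simp only [mul_zero, Real.cos_zero, mul_one] at this
    nlinarith
  · -- arg > 0 : imaginary part positive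
    intro h
    have : ((c:ℂ) + z ^ (α:ℂ)).im = 0 := by rw [h]; rfl
    rw [Complex.add_im, Complex.ofReal_im, auxGL_cpow_im z hz α] at this
    have hsin : 0 < Real.sin (α * Complex.arg z) := by
      apply Real.sin_pos_of_pos_of_lt_pi (by positivity)
      calc α * Complex.arg z ≤ α * (Real.pi / 2) := by
            exact mul_le_mul_of_nonneg_left harg2 hα.le
        _ < 2 * (Real.pi / 2) := by
            exact mul_lt_mul_of_pos_right hα2 (by positivity)
        _ = Real.pi := by ring
    nlinarith

lemma auxGL_den_lb (α c : ℝ) (hc : 0 < c) (z : ℂ) :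
    ‖z‖ ^ α - c ≤ ‖(c:ℂ) + z ^ (α:ℂ)‖ := by
  have h := Complex.norm_cpow_real z α
  have key : ‖z ^ (α:ℂ)‖ ≤ ‖(c:ℂ) + z ^ (α:ℂ)‖ + ‖(c:ℂ)‖ := by
    have : z ^ (α:ℂ) = ((c:ℂ) + z ^ (α:ℂ)) - c := by ring
    conv_lhs => rw [this]
    exact norm_sub_le _ _
  rw [Complex.norm_real, Real.norm_eq_abs, abs_of_pos hc] at key
  linarith [h ▸ key]

noncomputable def auxGL_f (α c x : ℝ) : ℂ → ℂ :=
  fun z => Complex.exp (Complex.I * z * x) / ((c:ℂ) + z ^ (α:ℂ))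

lemma auxGL_cont (α c x : ℝ) (hα : 0 < α) (hα2 : α < 2) (hc : 0 < c) :
    ContinuousOn (auxGL_f α c x) {z : ℂ | 0 ≤ z.re ∧ 0 ≤ z.im} := by
  apply ContinuousOn.div
  · exact (Complex.continuous_exp.comp (by continuity)).continuousOn
  · refine continuousOn_const.add ?_
    intro z hz
    exact (Complex.continuousAt_cpow_const_of_re_pos (Or.inl hz.1)
      (by simpa using hα)).continuousWithinAt
  · exact fun z hz => auxGL_den_ne α c hα hα2 hc z hz.1 hz.2

lemma auxGL_diff (α c x : ℝ) (hα : 0 < α) (hα2 : α < 2) (hc : 0 < c) (z : ℂ)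
    (h1 : 0 < z.re) (h2 : 0 < z.im) : DifferentiableAt ℂ (auxGL_f α c x) z := by
  have hslit : z ∈ Complex.slitPlane := Or.inl h1
  apply DifferentiableAt.div
  · exact (Complex.differentiable_exp.comp (by fun_prop)).differentiableAt
  · exact (differentiableAt_const _).add
      (Complex.hasStrictDerivAt_cpow_const hslit).hasDerivAt.differentiableAt
  · exact auxGL_den_ne α c hα hα2 hc z h1.le h2.le

lemma auxGL_rect (α c x : ℝ) (hα : 0 < α) (hα2 : α < 2) (hc : 0 < c) (T : ℝ) (hT : 0 ≤ T) :
    (∫ t : ℝ in (0:ℝ)..T, auxGL_f α c x t) =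
      (∫ t : ℝ in (0:ℝ)..T, auxGL_f α c x (t + T * Complex.I))
      - Complex.I • (∫ y : ℝ in (0:ℝ)..T, auxGL_f α c x (T + y * Complex.I))
      + Complex.I • (∫ y : ℝ in (0:ℝ)..T, auxGL_f α c x (y * Complex.I)) := by
  have key := Complex.integral_boundary_rect_eq_zero_of_differentiable_on_off_countable
    (auxGL_f α c x) 0 (T + T * Complex.I) ∅ countable_empty ?_ ?_
  · norm_num at key
    simp only [smul_eq_mul]
    linear_combination key
  · apply (auxGL_cont α c x hα hα2 hc).mono
    intro z hz
    rw [Complex.mem_reProdIm] at hz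
    obtain ⟨h1, h2⟩ := hz
    norm_num at h1 h2
    rw [Set.uIcc_of_le hT] at h1 h2
    exact ⟨h1.1, h2.1⟩
  · intro z hz
    obtain ⟨hz, -⟩ := hz
    rw [Complex.mem_reProdIm] at hz
    obtain ⟨h1, h2⟩ := hz
    have hre : ((T:ℂ) + (T:ℂ) * Complex.I).re = T := by simp
    have him : ((T:ℂ) + (T:ℂ) * Complex.I).im = T := by simp
    simp only [hre, him, Complex.zero_re, Complex.zero_im, min_eq_left hT, max_eq_right hT,
      mem_Ioo] at h1 h2
    exact auxGL_diff α c x hα hα2 hc z h1.1 h2.1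

lemma auxGL_real_axis (α c x : ℝ) (hc : 0 < c) (hα : 0 < α) (t : ℝ) (ht : 0 ≤ t) :
    (auxGL_f α c x t).re = Real.cos (t * x) / (c + t ^ α) := by
  unfold auxGL_f
  have h1 : ((t:ℂ)) ^ (α:ℂ) = ((t ^ α : ℝ) : ℂ) := (Complex.ofReal_cpow ht α).symm
  have h2 : (c : ℂ) + ((t ^ α : ℝ) : ℂ) = ((c + t ^ α : ℝ) : ℂ) := by push_cast; ring
  have h3 : Complex.I * (t:ℂ) * (x:ℂ) = ((t * x : ℝ) : ℂ) * Complex.I := by push_cast; ring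
  rw [h1, h2, h3, Complex.div_ofReal_re, Complex.exp_ofReal_mul_I_re]

lemma auxGL_imag_axis (α c x : ℝ) (hα : 0 < α) (hα2 : α < 2) (hc : 0 < c) (y : ℝ) (hy : 0 < y) :
    (Complex.I * auxGL_f α c x ((y:ℂ) * Complex.I)).re =
      Real.sin (Real.pi * α / 2) *
        (Real.exp (-y * x) *
          (y ^ α / (c ^ 2 + 2 * c * Real.cos (Real.pi * α / 2) * y ^ α + y ^ (2 * α)))) := by
  set θ := Real.pi * α / 2 with hθ
  have hz : ((y:ℂ) * Complex.I) ≠ 0 := by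
    simp [Complex.ext_iff, hy.ne']
  have habs : ‖(y:ℂ) * Complex.I‖ = y := by
    simp [abs_of_pos hy]
  have harg : Complex.arg ((y:ℂ) * Complex.I) = Real.pi / 2 := by
    rw [Complex.arg_eq_pi_div_two_iff]
    constructor <;> simp [hy]
  have hre : (((y:ℂ) * Complex.I) ^ (α:ℂ)).re = y ^ α * Real.cos θ := by
    rw [auxGL_cpow_re _ hz, habs, harg, hθ]; ring_nf
  have him : (((y:ℂ) * Complex.I) ^ (α:ℂ)).im = y ^ α * Real.sin θ := by
    rw [auxGL_cpow_im _ hz, habs, harg, hθ]; ring_nf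
  -- numerator: exp (I * (y I) x) = exp(-(y x))
  have hnum : Complex.exp (Complex.I * ((y:ℂ) * Complex.I) * (x:ℂ)) =
      ((Real.exp (-y * x) : ℝ) : ℂ) := by
    rw [show Complex.I * ((y:ℂ) * Complex.I) * (x:ℂ) = ((-y * x : ℝ) : ℂ) by
      push_cast; ring_nf; rw [Complex.I_sq]; ring]
    exact (Complex.ofReal_exp _).symm
  unfold auxGL_f
  rw [hnum]
  set w := ((y:ℂ) * Complex.I) ^ (α:ℂ) with hw
  have hden : ((c:ℂ) + w) ≠ 0 := auxGL_den_ne α c hα hα2 hc _ (by simp [hy.le]) (by simp [hy.le])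
  -- compute the real part of I * (r / (c + w))
  have : (Complex.I * (((Real.exp (-y * x) : ℝ) : ℂ) / ((c:ℂ) + w))).re =
      - (((Real.exp (-y * x) : ℝ) : ℂ) / ((c:ℂ) + w)).im := by
    simp [Complex.mul_re]
  rw [this, Complex.div_im]
  have hre' : ((c:ℂ) + w).re = c + y ^ α * Real.cos θ := by simp [hre]
  have him' : ((c:ℂ) + w).im = y ^ α * Real.sin θ := by simp [him]
  have hnormSq : Complex.normSq ((c:ℂ) + w) =
      c ^ 2 + 2 * c * Real.cos θ * y ^ α + y ^ (2 * α) := by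
    rw [Complex.normSq_apply, hre', him']
    have h2α : y ^ (2 * α) = (y ^ α) ^ 2 := by
      rw [two_mul, Real.rpow_add hy]; ring_nf
    rw [h2α]
    nlinarith [Real.sin_sq_add_cos_sq θ]
  rw [hnormSq]
  simp only [Complex.ofReal_im, Complex.ofReal_re, hre', him']
  have hDpos : 0 < c ^ 2 + 2 * c * Real.cos θ * y ^ α + y ^ (2 * α) := by
    have hsin : 0 < Real.sin θ := by
      apply Real.sin_pos_of_pos_of_lt_pi
      · rw [hθ]; positivity
      · rw [hθ]; nlinarith [Real.pi_pos]
    have hyα : 0 < y ^ α := Real.rpow_pos_of_pos hy α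
    have h2α : y ^ (2 * α) = (y ^ α) ^ 2 := by
      rw [two_mul, Real.rpow_add hy]; ring_nf
    rw [h2α]
    nlinarith [sq_nonneg (c + y ^ α * Real.cos θ), Real.sin_sq_add_cos_sq θ,
      mul_pos (mul_pos hyα hsin) (mul_pos hyα hsin)]
  field_simp
  ring

lemma auxGL_D_lb (α c : ℝ) (hc : 0 < c) (θ : ℝ) (a : ℝ) (ha : 0 ≤ a) :
    c ^ 2 * Real.sin θ ^ 2 ≤ c ^ 2 + 2 * c * Real.cos θ * a + a ^ 2 := by
  nlinarith [sq_nonneg (a + c * Real.cos θ), Real.sin_sq_add_cos_sq θ]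

lemma auxGL_integrable (α c x : ℝ) (hα : 0 < α) (hα2 : α < 2) (hc : 0 < c) (hx : 0 < x) :
    IntegrableOn (fun t : ℝ =>
      Real.exp (-t * x) *
        (t ^ α / (c ^ 2 + 2 * c * Real.cos (Real.pi * α / 2) * t ^ α + t ^ (2 * α))))
      (Set.Ioi 0) := by
  set θ := Real.pi * α / 2 with hθ
  have hsin : 0 < Real.sin θ := by
    apply Real.sin_pos_of_pos_of_lt_pi
    · rw [hθ]; positivity
    · rw [hθ]; nlinarith [Real.pi_pos]
  have hδ : 0 < c ^ 2 * Real.sin θ ^ 2 := by positivity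
  set δ := c ^ 2 * Real.sin θ ^ 2 with hδdef
  have hD : ∀ t : ℝ, 0 < t → δ ≤ c ^ 2 + 2 * c * Real.cos θ * t ^ α + t ^ (2 * α) := by
    intro t ht
    have h2α : t ^ (2 * α) = (t ^ α) ^ 2 := by
      rw [two_mul, Real.rpow_add ht]; ring_nf
    rw [h2α]
    exact auxGL_D_lb α c hc θ _ (Real.rpow_nonneg ht.le α)
  -- majorant
  have hmaj : IntegrableOn (fun t : ℝ => δ⁻¹ * (t ^ α * Real.exp (-x * t))) (Set.Ioi 0) := by
    have := integrableOn_rpow_mul_exp_neg_mul_rpow (s := α) (p := 1) (b := x)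
      (by linarith) one_pos hx
    simp only [Real.rpow_one] at this
    exact this.const_mul _
  apply Integrable.mono' hmaj
  · -- measurability
    apply ContinuousOn.aestronglyMeasurable _ measurableSet_Ioi
    intro t ht
    have ht' : (0:ℝ) < t := ht
    have hrpow : ContinuousAt (fun s : ℝ => s ^ α) t :=
      Real.continuousAt_rpow_const t α (Or.inl ht'.ne')
    have hrpow2 : ContinuousAt (fun s : ℝ => s ^ (2*α)) t :=
      Real.continuousAt_rpow_const t (2*α) (Or.inl ht'.ne')
    have hDne : c ^ 2 + 2 * c * Real.cos θ * t ^ α + t ^ (2 * α) ≠ 0 :=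
      (lt_of_lt_of_le hδ (hD t ht')).ne'
    apply ContinuousWithinAt.mul
    · exact ((Real.continuous_exp.comp (by continuity)).continuousAt).continuousWithinAt
    · exact (ContinuousAt.div hrpow (by fun_prop) hDne).continuousWithinAt
  · filter_upwards [ae_restrict_mem measurableSet_Ioi] with t ht
    have ht' : (0:ℝ) < t := ht
    have hDpos : 0 < c ^ 2 + 2 * c * Real.cos θ * t ^ α + t ^ (2 * α) :=
      lt_of_lt_of_le hδ (hD t ht')
    have htα : 0 ≤ t ^ α := Real.rpow_nonneg ht'.le α
    have hexp : 0 < Real.exp (-t * x) := Real.exp_pos _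
    have hge : 0 ≤ Real.exp (-t * x) *
        (t ^ α / (c ^ 2 + 2 * c * Real.cos θ * t ^ α + t ^ (2 * α))) := by positivity
    rw [Real.norm_eq_abs, _root_.abs_of_nonneg hge]
    have hrw : δ⁻¹ * (t ^ α * Real.exp (-x * t)) = Real.exp (-t * x) * (t ^ α / δ) := by
      rw [show -x * t = -t * x by ring]
      field_simp
    rw [hrw]
    gcongr
    exact hD t ht' 

lemma auxGL_f_norm_le (α c x : ℝ) (hc : 0 < c) (z : ℂ) (M : ℝ) (hM : 0 < M)
    (hle : M + c ≤ ‖z‖ ^ α) :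
    ‖auxGL_f α c x z‖ ≤ Real.exp (-(x * z.im)) / M := by
  unfold auxGL_f
  rw [norm_div, Complex.norm_exp]
  have hre : (Complex.I * z * (x:ℂ)).re = -(x * z.im) := by
    simp [Complex.mul_re, Complex.mul_im]; ring
  rw [hre]
  have hden : M ≤ ‖(c:ℂ) + z ^ (α:ℂ)‖ := by
    have h := auxGL_den_lb α c hc z
    linarith
  gcongr

lemma auxGL_top_bound (α c x T : ℝ) (hα : 0 < α) (hc : 0 < c) (hT : 0 ≤ T)
    (hTα : c + 1 ≤ T ^ α) :
    ‖∫ t : ℝ in (0:ℝ)..T, auxGL_f α c x ((t:ℂ) + T * Complex.I)‖ ≤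
      Real.exp (-(x * T)) / (T ^ α - c) * T := by
  have hM : 0 < T ^ α - c := by linarith
  have key : ∀ t ∈ Set.uIoc (0:ℝ) T, ‖auxGL_f α c x ((t:ℂ) + T * Complex.I)‖ ≤
      Real.exp (-(x * T)) / (T ^ α - c) := by
    intro t ht
    set z : ℂ := (t:ℂ) + T * Complex.I with hz
    have him : z.im = T := by simp [hz]
    have habs : T ≤ ‖z‖ := by
      have := Complex.abs_im_le_norm z
      rw [him, _root_.abs_of_nonneg hT] at this
      exact this
    have hαle : T ^ α ≤ ‖z‖ ^ α := Real.rpow_le_rpow hT habs hα.le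
    have := auxGL_f_norm_le α c x hc z (T ^ α - c) hM (by linarith)
    rwa [him] at this
  have := intervalIntegral.norm_integral_le_of_norm_le_const key
  rwa [sub_zero, _root_.abs_of_nonneg hT] at this

lemma auxGL_exp_integral (x T : ℝ) (hx : 0 < x) (hT : 0 ≤ T) :
    (∫ y : ℝ in (0:ℝ)..T, Real.exp (-(x * y))) ≤ 1 / x := by
  have hderiv : ∀ y ∈ uIcc (0:ℝ) T,
      HasDerivAt (fun s : ℝ => -(Real.exp (-(x * s)) / x)) (Real.exp (-(x * y))) y := by
    intro y _
    have h1 : HasDerivAt (fun s : ℝ => -(x * s)) (-x) y := by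
      simpa using ((hasDerivAt_id y).const_mul (-x))
    have h2 := (Real.hasDerivAt_exp (-(x * y))).comp y h1
    have h3 := (h2.div_const x).neg
    have h4 : -(Real.exp (-(x * y)) * -x / x) = Real.exp (-(x * y)) := by
      rw [mul_neg, neg_div, neg_neg, mul_div_assoc, div_self hx.ne', mul_one]
    rw [h4] at h3
    exact h3
  have hint : (∫ y : ℝ in (0:ℝ)..T, Real.exp (-(x * y))) =
      -(Real.exp (-(x * T)) / x) - -(Real.exp (-(x * 0)) / x) := by
    apply intervalIntegral.integral_eq_sub_of_hasDerivAt hderiv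
    apply Continuous.intervalIntegrable
    continuity
  rw [hint]
  simp only [mul_zero, neg_zero, Real.exp_zero]
  have : 0 < Real.exp (-(x * T)) := Real.exp_pos _
  calc -(Real.exp (-(x * T)) / x) - -(1 / x) = 1/x - Real.exp (-(x*T))/x := by ring
    _ ≤ 1/x := by
        have : 0 ≤ Real.exp (-(x*T))/x := by positivity
        linarith

lemma auxGL_right_bound (α c x T : ℝ) (hα : 0 < α) (hc : 0 < c) (hx : 0 < x) (hT : 0 ≤ T)
    (hTα : c + 1 ≤ T ^ α) :
    ‖∫ y : ℝ in (0:ℝ)..T, auxGL_f α c x ((T:ℂ) + y * Complex.I)‖ ≤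
      1 / (x * (T ^ α - c)) := by
  have hM : 0 < T ^ α - c := by linarith
  have key : ∀ᵐ (y : ℝ) ∂(volume.restrict (Set.uIoc (0:ℝ) T)),
      ‖auxGL_f α c x ((T:ℂ) + (y:ℂ) * Complex.I)‖ ≤ Real.exp (-(x * y)) / (T ^ α - c) := by
    apply ae_of_all
    intro y
    set z : ℂ := (T:ℂ) + y * Complex.I with hz
    have him : z.im = y := by simp [hz]
    have habs : T ≤ ‖z‖ := by
      have h0 := Complex.abs_re_le_norm z
      have hre : z.re = T := by simp [hz]
      rw [hre, _root_.abs_of_nonneg hT] at h0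
      exact h0
    have hαle : T ^ α ≤ ‖z‖ ^ α := Real.rpow_le_rpow hT habs hα.le
    have := auxGL_f_norm_le α c x hc z (T ^ α - c) hM (by linarith)
    rwa [him] at this
  have hbound : IntervalIntegrable (fun y : ℝ => Real.exp (-(x * y)) / (T ^ α - c))
      volume 0 T := by
    apply Continuous.intervalIntegrable; continuity
  have h1 := intervalIntegral.norm_integral_le_abs_of_norm_le key hbound
  have h2 : (∫ y : ℝ in (0:ℝ)..T, Real.exp (-(x * y)) / (T ^ α - c)) =
      (∫ y : ℝ in (0:ℝ)..T, Real.exp (-(x * y))) / (T ^ α - c) := by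
    rw [intervalIntegral.integral_div]
  have h3 : 0 ≤ ∫ y : ℝ in (0:ℝ)..T, Real.exp (-(x * y)) := by
    apply intervalIntegral.integral_nonneg hT
    intro y _; positivity
  calc ‖∫ y : ℝ in (0:ℝ)..T, auxGL_f α c x ((T:ℂ) + y * Complex.I)‖
      ≤ |∫ y : ℝ in (0:ℝ)..T, Real.exp (-(x * y)) / (T ^ α - c)| := h1
    _ = (∫ y : ℝ in (0:ℝ)..T, Real.exp (-(x * y))) / (T ^ α - c) := by
        rw [h2, _root_.abs_of_nonneg (by positivity)]
    _ ≤ (1 / x) / (T ^ α - c) := by gcongr; exact auxGL_exp_integral x T hx hT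
    _ = 1 / (x * (T ^ α - c)) := by field_simp

/-- For `α ∈ (0,2)` and `c > 0`, the Green function on the line
`H_{α,c}(x) = (1/π) lim_{T→∞} ∫_0^T cos(tx)/(c + t^α) dt` admits, for every `x > 0`, the
absolutely convergent Laplace-type representation
`H_{α,c}(x) = (sin(πα/2)/π) ∫_0^∞ e^{-tx} t^α / (c² + 2c cos(πα/2) t^α + t^{2α}) dt`. -/
theorem green_line_laplace_representation (α c : ℝ) (hα : 0 < α) (hα2 : α < 2) (hc : 0 < c)
    (H : ℝ → ℝ)
    (hH : ∀ x : ℝ, 0 < x →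
      Tendsto (fun T : ℝ => (1 / Real.pi) * ∫ t in (0 : ℝ)..T, Real.cos (t * x) / (c + t ^ α))
        atTop (nhds (H x))) :
    ∀ x : ℝ, 0 < x →
      IntegrableOn (fun t : ℝ =>
        Real.exp (-t * x) *
          (t ^ α / (c ^ 2 + 2 * c * Real.cos (Real.pi * α / 2) * t ^ α + t ^ (2 * α))))
        (Set.Ioi 0) ∧
      H x = (Real.sin (Real.pi * α / 2) / Real.pi) *
        ∫ t in Set.Ioi (0 : ℝ),
          Real.exp (-t * x) *
            (t ^ α / (c ^ 2 + 2 * c * Real.cos (Real.pi * α / 2) * t ^ α + t ^ (2 * α))) := by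
  intro x hx
  have hInt := auxGL_integrable α c x hα hα2 hc hx
  refine ⟨hInt, ?_⟩
  set G : ℝ → ℝ := fun t => Real.exp (-t * x) *
    (t ^ α / (c ^ 2 + 2 * c * Real.cos (Real.pi * α / 2) * t ^ α + t ^ (2 * α))) with hG
  have hGlim : Tendsto (fun T : ℝ => ∫ t in (0:ℝ)..T, G t) atTop
      (nhds (∫ t in Set.Ioi (0:ℝ), G t)) :=
    intervalIntegral_tendsto_integral_Ioi 0 hInt tendsto_id
  -- quadrant set
  set Q : Set ℂ := {z : ℂ | 0 ≤ z.re ∧ 0 ≤ z.im} with hQ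
  have hcont := auxGL_cont α c x hα hα2 hc
  -- key identity for T ≥ 0
  have hkey : ∀ T : ℝ, 0 ≤ T →
      (∫ t in (0:ℝ)..T, Real.cos (t * x) / (c + t ^ α))
        = Real.sin (Real.pi * α / 2) * (∫ t in (0:ℝ)..T, G t)
          + ((∫ t : ℝ in (0:ℝ)..T, auxGL_f α c x ((t:ℂ) + T * Complex.I)).re
             - (Complex.I •
                (∫ y : ℝ in (0:ℝ)..T, auxGL_f α c x ((T:ℂ) + y * Complex.I))).re) := by
    intro T hT
    -- integrability of f on the real segment
    have hf_real : IntervalIntegrable (fun t : ℝ => auxGL_f α c x t) volume 0 T := by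
      apply ContinuousOn.intervalIntegrable
      apply hcont.comp Complex.continuous_ofReal.continuousOn
      intro t ht
      rw [Set.uIcc_of_le hT] at ht
      exact ⟨by simpa using ht.1, by simp⟩
    -- integrability of f on the imaginary segment
    have hf_imag : IntervalIntegrable (fun y : ℝ => auxGL_f α c x ((y:ℂ) * Complex.I))
        volume 0 T := by
      apply ContinuousOn.intervalIntegrable
      apply hcont.comp (by fun_prop : Continuous fun y : ℝ => (y:ℂ) * Complex.I).continuousOn
      intro y hy
      rw [Set.uIcc_of_le hT] at hy
      exact ⟨by simp, by simpa using hy.1⟩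
    -- step 1 : real integrand
    have h1 : (∫ t in (0:ℝ)..T, Real.cos (t * x) / (c + t ^ α))
        = ∫ t in (0:ℝ)..T, (auxGL_f α c x t).re := by
      apply intervalIntegral.integral_congr
      intro t ht
      rw [Set.uIcc_of_le hT] at ht
      exact (auxGL_real_axis α c x hc hα t ht.1).symm
    -- step 2 : real part outside
    have h2 : (∫ t in (0:ℝ)..T, (auxGL_f α c x t).re)
        = (∫ t in (0:ℝ)..T, auxGL_f α c x t).re :=
      Complex.reCLM.intervalIntegral_comp_comm hf_real
    -- step 3 : rectangle
    have h3 := auxGL_rect α c x hα hα2 hc T hT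
    -- step 4 : imaginary-axis term
    have h4 : (Complex.I •
        (∫ y : ℝ in (0:ℝ)..T, auxGL_f α c x ((y:ℂ) * Complex.I))).re
        = Real.sin (Real.pi * α / 2) * (∫ t in (0:ℝ)..T, G t) := by
      have him : (∫ y : ℝ in (0:ℝ)..T, auxGL_f α c x ((y:ℂ) * Complex.I)).im
          = ∫ y : ℝ in (0:ℝ)..T, (auxGL_f α c x ((y:ℂ) * Complex.I)).im :=
        (Complex.imCLM.intervalIntegral_comp_comm hf_imag).symm
      have hcongr : (∫ y : ℝ in (0:ℝ)..T, (auxGL_f α c x ((y:ℂ) * Complex.I)).im)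
          = ∫ y : ℝ in (0:ℝ)..T, -(Real.sin (Real.pi * α / 2) * G y) := by
        apply intervalIntegral.integral_congr_ae
        apply ae_of_all
        intro y hy
        rw [Set.uIoc_of_le hT] at hy
        have := auxGL_imag_axis α c x hα hα2 hc y hy.1
        have hIre : (Complex.I * auxGL_f α c x ((y:ℂ) * Complex.I)).re
            = -(auxGL_f α c x ((y:ℂ) * Complex.I)).im := by
          simp [Complex.mul_re]
        rw [hIre] at this
        rw [hG]
        linarith [this]
      have : (Complex.I •
          (∫ y : ℝ in (0:ℝ)..T, auxGL_f α c x ((y:ℂ) * Complex.I))).re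
          = -(∫ y : ℝ in (0:ℝ)..T, auxGL_f α c x ((y:ℂ) * Complex.I)).im := by
        simp [Complex.mul_re]
      rw [this, him, hcongr, intervalIntegral.integral_neg,
        intervalIntegral.integral_const_mul]
      ring
    rw [h1, h2, h3]
    simp only [Complex.sub_re, Complex.add_re]
    rw [h4]
    ring
  -- error terms tend to zero
  have hEbound : ∀ᶠ (T : ℝ) in atTop,
      ‖(∫ t : ℝ in (0:ℝ)..T, auxGL_f α c x ((t:ℂ) + T * Complex.I)).re
        - (Complex.I • (∫ y : ℝ in (0:ℝ)..T, auxGL_f α c x ((T:ℂ) + y * Complex.I))).re‖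
      ≤ Real.exp (-(x * T)) / (T ^ α - c) * T + 1 / (x * (T ^ α - c)) := by
    filter_upwards [eventually_ge_atTop (0:ℝ),
      (tendsto_rpow_atTop hα).eventually_ge_atTop (c + 1)] with T hT hTα
    have hB := auxGL_top_bound α c x T hα hc hT hTα
    have hC := auxGL_right_bound α c x T hα hc hx hT hTα
    have h1 : |(∫ t : ℝ in (0:ℝ)..T, auxGL_f α c x ((t:ℂ) + T * Complex.I)).re|
        ≤ ‖∫ t : ℝ in (0:ℝ)..T, auxGL_f α c x ((t:ℂ) + T * Complex.I)‖ :=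
      Complex.abs_re_le_norm _
    have h2 : |(Complex.I • (∫ y : ℝ in (0:ℝ)..T,
        auxGL_f α c x ((T:ℂ) + y * Complex.I))).re|
        ≤ ‖∫ y : ℝ in (0:ℝ)..T, auxGL_f α c x ((T:ℂ) + y * Complex.I)‖ := by
      have h := Complex.abs_re_le_norm (Complex.I • (∫ y : ℝ in (0:ℝ)..T,
        auxGL_f α c x ((T:ℂ) + y * Complex.I)))
      rw [smul_eq_mul, norm_mul, Complex.norm_I, one_mul] at h
      simpa using h
    rw [Real.norm_eq_abs]
    calc |(∫ t : ℝ in (0:ℝ)..T, auxGL_f α c x ((t:ℂ) + T * Complex.I)).re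
        - (Complex.I • (∫ y : ℝ in (0:ℝ)..T, auxGL_f α c x ((T:ℂ) + y * Complex.I))).re|
        ≤ |(∫ t : ℝ in (0:ℝ)..T, auxGL_f α c x ((t:ℂ) + T * Complex.I)).re|
          + |(Complex.I • (∫ y : ℝ in (0:ℝ)..T,
              auxGL_f α c x ((T:ℂ) + y * Complex.I))).re| := abs_sub _ _
      _ ≤ Real.exp (-(x * T)) / (T ^ α - c) * T + 1 / (x * (T ^ α - c)) := by
          apply add_le_add (h1.trans hB) (h2.trans hC)
  -- the bound tends to zero
  have hdenom : Tendsto (fun T : ℝ => T ^ α - c) atTop atTop := by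
    have := tendsto_atTop_add_const_right atTop (-c) (tendsto_rpow_atTop hα)
    simpa [sub_eq_add_neg] using this
  have hinv : Tendsto (fun T : ℝ => (T ^ α - c)⁻¹) atTop (nhds 0) :=
    hdenom.inv_tendsto_atTop
  have hexpT : Tendsto (fun T : ℝ => T * Real.exp (-(x * T))) atTop (nhds 0) := by
    have h0 := Real.tendsto_pow_mul_exp_neg_atTop_nhds_zero 1
    have hxT : Tendsto (fun T : ℝ => x * T) atTop atTop :=
      tendsto_id.const_mul_atTop hx
    have hcomp := h0.comp hxT
    have hconst := hcomp.const_mul (1 / x)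
    rw [mul_zero] at hconst
    apply hconst.congr
    intro T
    simp only [Function.comp]
    field_simp
  have hb0 : Tendsto (fun T : ℝ =>
      Real.exp (-(x * T)) / (T ^ α - c) * T + 1 / (x * (T ^ α - c))) atTop (nhds 0) := by
    have h1 : Tendsto (fun T : ℝ => Real.exp (-(x * T)) / (T ^ α - c) * T) atTop (nhds 0) := by
      have := hexpT.mul hinv
      rw [mul_zero] at this
      apply this.congr
      intro T
      ring
    have h2 : Tendsto (fun T : ℝ => 1 / (x * (T ^ α - c))) atTop (nhds 0) := by
      have := hinv.const_mul (1 / x)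
      rw [mul_zero] at this
      apply this.congr
      intro T
      field_simp
    have := h1.add h2
    rwa [add_zero] at this
  have hE0 : Tendsto (fun T : ℝ =>
      (∫ t : ℝ in (0:ℝ)..T, auxGL_f α c x ((t:ℂ) + T * Complex.I)).re
        - (Complex.I • (∫ y : ℝ in (0:ℝ)..T, auxGL_f α c x ((T:ℂ) + y * Complex.I))).re)
      atTop (nhds 0) :=
    squeeze_zero_norm' hEbound hb0
  have hFlim : Tendsto (fun T : ℝ => ∫ t in (0:ℝ)..T, Real.cos (t * x) / (c + t ^ α)) atTop
      (nhds (Real.sin (Real.pi * α / 2) * ∫ t in Set.Ioi (0:ℝ), G t)) := by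
    have hsum := (hGlim.const_mul (Real.sin (Real.pi * α / 2))).add hE0
    rw [add_zero] at hsum
    apply hsum.congr'
    filter_upwards [eventually_ge_atTop (0:ℝ)] with T hT
    exact (hkey T hT).symm
  have hlim2 := hFlim.const_mul (1 / Real.pi)
  have hHx := tendsto_nhds_unique (hH x hx) hlim2
  rw [hHx]
  ring
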